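/- Characterization of Schmidt-symmetric states (Theorem 4): a bipartite density matrix ρ on ℂ^d ⊗ ℂ^d admits a decomposition ρ = Σ_i λ_i A_i ⊗ A_i^* with λ_i ≥ 0 and {A_i} an orthonormal family with respect to the Hilbert–Schmidt inner product (A_i^* denoting entrywise complex conjugation) if and only if ‖R(ρ)‖_tr = Tr R(ρ), equivalently if and only if the realigned matrix R(ρ) is positive semidefinite. -/

import Mathlib

open Matrix Kronecker ComplexOrder

/-- Trace norm `‖X‖_tr = Tr √(X Xᴴ)`. -/
noncomputable def traceNorm {m n : Type*} [Fintype m] [Fintype n] [DecidableEq m]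
    (X : Matrix m n ℂ) : ℝ :=
  (((Matrix.posSemidef_self_mul_conjTranspose X).1.eigenvectorUnitary.1 *
      diagonal ((fun x : ℝ => (x : ℂ)) ∘ Real.sqrt ∘
        (Matrix.posSemidef_self_mul_conjTranspose X).1.eigenvalues) *
      (star (Matrix.posSemidef_self_mul_conjTranspose X).1.eigenvectorUnitary :
        Matrix m m ℂ)).trace).re

/-- A density matrix: positive semidefinite with trace 1. -/
def IsDensityMatrix {n : Type*} [Fintype n] (ρ : Matrix n n ℂ) : Prop :=
  ρ.PosSemidef ∧ ρ.trace = 1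

/-- The realignment map: `R(ρ)_{(i,j),(k,l)} = ρ_{(i,k),(j,l)}`. -/
def realign {dA dB : ℕ} (ρ : Matrix (Fin dA × Fin dB) (Fin dA × Fin dB) ℂ) :
    Matrix (Fin dA × Fin dA) (Fin dB × Fin dB) ℂ :=
  fun p q => ρ (p.1, q.1) (p.2, q.2)

/-- Partial transpose on the second subsystem: `(ρ^{T₂})_{(i,k),(j,l)} = ρ_{(i,l),(j,k)}`. -/
def ptranspose2 {d : ℕ} (ρ : Matrix (Fin d × Fin d) (Fin d × Fin d) ℂ) :
    Matrix (Fin d × Fin d) (Fin d × Fin d) ℂ :=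
  fun p q => ρ (p.1, q.2) (q.1, p.2)

/-- The swap (exchange) operator `F_{(i,k),(j,l)} = δ_{il} δ_{kj}`. -/
def swapOp (d : ℕ) : Matrix (Fin d × Fin d) (Fin d × Fin d) ℂ :=
  fun p q => if p.1 = q.2 ∧ p.2 = q.1 then 1 else 0

/-- The unnormalized maximally entangled projector `(|Ω⟩⟨Ω|)_{(i,k),(j,l)} = δ_{ik} δ_{jl}`. -/
def omegaProj (d : ℕ) : Matrix (Fin d × Fin d) (Fin d × Fin d) ℂ :=
  fun p q => if p.1 = p.2 ∧ q.1 = q.2 then 1 else 0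

/-- Separability: `ρ` is a finite convex combination of products of density matrices. -/
def IsSeparableState {dA dB : ℕ} (ρ : Matrix (Fin dA × Fin dB) (Fin dA × Fin dB) ℂ) : Prop :=
  ∃ (m : ℕ) (p : Fin m → ℝ) (σ : Fin m → Matrix (Fin dA) (Fin dA) ℂ)
    (τ : Fin m → Matrix (Fin dB) (Fin dB) ℂ),
    (∀ k, 0 ≤ p k) ∧ (∑ k, p k = 1) ∧ (∀ k, IsDensityMatrix (σ k)) ∧
    (∀ k, IsDensityMatrix (τ k)) ∧ ρ = ∑ k, (p k : ℂ) • (σ k ⊗ₖ τ k)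


set_option linter.unusedSectionVars false
namespace SchmidtAux

variable {n : Type*} [Fintype n] [DecidableEq n]

lemma star_dot_self (z : n → ℂ) :
    star z ⬝ᵥ z = ((∑ i, Complex.normSq (z i) : ℝ) : ℂ) := by
  push_cast
  simp [dotProduct, Complex.normSq_eq_conj_mul_self]

lemma posSemidef_vecMulVec_star (x : n → ℂ) :
    (vecMulVec x (star x)).PosSemidef := by
  rw [vecMulVec_eq Unit, ← conjTranspose_replicateCol]
  exact posSemidef_self_mul_conjTranspose _

lemma posSemidef_smul_real {M : Matrix n n ℂ} (hM : M.PosSemidef) {c : ℝ} (hc : 0 ≤ c) :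
    ((c : ℂ) • M).PosSemidef := by
  exact hM.smul (by exact_mod_cast hc)

lemma posSemidef_sum_vecMulVec {r : ℕ} (lam : Fin r → ℝ) (hl : ∀ i, 0 ≤ lam i)
    (v : Fin r → n → ℂ) :
    (∑ i, (lam i : ℂ) • vecMulVec (v i) (star (v i))).PosSemidef := by
  exact Finset.sum_induction (fun i => (lam i : ℂ) • vecMulVec (v i) (star (v i)))
    Matrix.PosSemidef (fun a b ha hb => ha.add hb) Matrix.PosSemidef.zero
    (fun i _ => posSemidef_smul_real (posSemidef_vecMulVec_star (v i)) (hl i))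


lemma unitary_col_orthonormal {M : Matrix n n ℂ} (hH : M.IsHermitian) (i j : n) :
    star (fun p => (hH.eigenvectorUnitary : Matrix n n ℂ) p i) ⬝ᵥ
      (fun p => (hH.eigenvectorUnitary : Matrix n n ℂ) p j) = if i = j then 1 else 0 := by
  have h1 : star (hH.eigenvectorUnitary : Matrix n n ℂ) * hH.eigenvectorUnitary = 1 :=
    Matrix.mem_unitaryGroup_iff'.mp hH.eigenvectorUnitary.2
  have := congrFun (congrFun h1 i) j
  simpa [Matrix.mul_apply, dotProduct, Matrix.one_apply] using this

lemma posSemidef_eq_sum_vecMulVec {M : Matrix n n ℂ} (hM : M.PosSemidef) :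
    ∃ (lam : n → ℝ) (v : n → n → ℂ), (∀ i, 0 ≤ lam i) ∧
      (∀ i j, star (v i) ⬝ᵥ v j = if i = j then 1 else 0) ∧
      M = ∑ i, (lam i : ℂ) • vecMulVec (v i) (star (v i)) := by
  have hH := hM.1
  refine ⟨hH.eigenvalues, fun i p => (hH.eigenvectorUnitary : Matrix n n ℂ) p i,
    hM.eigenvalues_nonneg, unitary_col_orthonormal hH, ?_⟩
  conv_lhs => rw [hH.spectral_theorem]
  ext p q
  simp only [Unitary.conjStarAlgAut_apply, Matrix.mul_apply, diagonal_apply, Matrix.sum_apply, Matrix.smul_apply,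
    vecMulVec_apply, Pi.star_apply, Finset.sum_mul, star_apply, Function.comp_apply,
    smul_eq_mul]
  rw [Finset.sum_comm]
  apply Finset.sum_congr rfl
  intro m _
  simp [Finset.sum_ite_eq, Finset.mul_sum]
  ring

end SchmidtAux

namespace SchmidtAux
variable {n : Type*} [Fintype n] [DecidableEq n]

lemma traceNorm_eq_trace_of_posSemidef {X : Matrix n n ℂ} (hX : X.PosSemidef) :
    (traceNorm X : ℂ) = X.trace := by
  have h1 : X = (Matrix.posSemidef_self_mul_conjTranspose X).1.eigenvectorUnitary.1 *
      diagonal ((fun x : ℝ => (x : ℂ)) ∘ Real.sqrt ∘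
        (Matrix.posSemidef_self_mul_conjTranspose X).1.eigenvalues) *
      (star (Matrix.posSemidef_self_mul_conjTranspose X).1.eigenvectorUnitary :
        Matrix n n ℂ) := by
    open scoped MatrixOrder in
    have e1 : CFC.sqrt (X * Xᴴ) = X := by
      rw [hX.1.eq, ← pow_two]
      exact CFC.sqrt_sq X hX.nonneg
    open scoped MatrixOrder in
    rw [CFC.sqrt_eq_cfc, cfc_nnreal_eq_real _ _ (Matrix.posSemidef_self_mul_conjTranspose X).nonneg,
      (Matrix.posSemidef_self_mul_conjTranspose X).1.cfc_eq] at e1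
    refine e1.symm.trans ?_
    simp only [IsHermitian.cfc, Unitary.conjStarAlgAut_apply]
    have hd : (RCLike.ofReal ∘ (fun x => ((NNReal.sqrt x.toNNReal : NNReal) : ℝ)) ∘
        (Matrix.posSemidef_self_mul_conjTranspose X).1.eigenvalues : n → ℂ) =
        (fun x : ℝ => (x : ℂ)) ∘ Real.sqrt ∘
        (Matrix.posSemidef_self_mul_conjTranspose X).1.eigenvalues := by
      funext i
      simp [max_eq_left ((Matrix.posSemidef_self_mul_conjTranspose X).eigenvalues_nonneg i)]
    simp only [hd]
  have h2 := Matrix.trace_conjTranspose X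
  rw [hX.1] at h2
  simp only [traceNorm, ← h1]
  exact (Complex.conj_eq_iff_re.mp h2.symm)

lemma posSemidef_of_traceNorm_eq_trace {X : Matrix n n ℂ}
    (h : (traceNorm X : ℂ) = X.trace) : X.PosSemidef := by
  have hM : (X * Xᴴ).PosSemidef := Matrix.posSemidef_self_mul_conjTranspose X
  have hH := hM.1
  set U : Matrix n n ℂ := (hH.eigenvectorUnitary : Matrix n n ℂ) with hUdef
  have hUU : star U * U = 1 := Matrix.mem_unitaryGroup_iff'.mp hH.eigenvectorUnitary.2
  have hUU' : U * star U = 1 := Matrix.mem_unitaryGroup_iff.mp hH.eigenvectorUnitary.2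
  set t : n → ℝ := hH.eigenvalues with htdef
  set s : n → ℝ := fun i => Real.sqrt (t i) with hsdef
  have hs0 : ∀ i, 0 ≤ s i := fun i => Real.sqrt_nonneg _
  have hst : ∀ i, s i * s i = t i := fun i => Real.mul_self_sqrt (hM.eigenvalues_nonneg i)
  have hsqrt : traceNorm X
      = ((U * Matrix.diagonal (fun i => (s i : ℂ)) * star U).trace).re := rfl
  have hTX : X.trace = ((∑ i, s i : ℝ) : ℂ) := by
    rw [← h]
    simp only [hsqrt, Matrix.trace_mul_cycle, ← Matrix.mul_assoc, hUU,
      Matrix.one_mul, Matrix.trace_diagonal]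
    norm_cast
  -- columns, images, diagonal entries
  set u : n → n → ℂ := fun i p => U p i with hudef
  set w : n → n → ℂ := fun i => Xᴴ *ᵥ u i with hwdef
  set c : n → ℂ := fun i => star (u i) ⬝ᵥ (X *ᵥ u i) with hcdef
  have huu : ∀ i j, star (u i) ⬝ᵥ u j = if i = j then 1 else 0 :=
    fun i j => unitary_col_orthonormal hH i j
  have hMu : ∀ i, (X * Xᴴ) *ᵥ u i = (t i : ℂ) • u i := by
    intro i
    have h1 : u i = ⇑(hH.eigenvectorBasis i) := by
      funext p; exact hH.eigenvectorUnitary_apply p i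
    rw [h1, hH.mulVec_eigenvectorBasis]
    funext p
    simp [Complex.real_smul, htdef]
  have hww : ∀ i, star (w i) ⬝ᵥ w i = (t i : ℂ) := by
    intro i
    rw [hwdef]
    simp only [Matrix.star_mulVec, Matrix.conjTranspose_conjTranspose]
    rw [← Matrix.dotProduct_mulVec, Matrix.mulVec_mulVec, hMu i, dotProduct_smul,
      huu i i]
    simp
  have hc_w : ∀ i, c i = star (w i) ⬝ᵥ u i := by
    intro i
    rw [hcdef, hwdef]
    simp only [Matrix.star_mulVec, Matrix.conjTranspose_conjTranspose]
    rw [← Matrix.dotProduct_mulVec]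
  have hcu : ∀ i, star (u i) ⬝ᵥ w i = star (c i) := by
    intro i
    rw [hc_w i]
    simp only [dotProduct, Pi.star_apply, star_sum, star_mul', star_star]
    exact Finset.sum_congr rfl fun p _ => mul_comm _ _
  -- trace X = sum of c
  have htrc : X.trace = ∑ i, c i := by
    have e1 : X.trace = (star U * X * U).trace := by
      rw [Matrix.trace_mul_cycle, hUU', Matrix.one_mul]
    rw [e1, Matrix.trace]
    apply Finset.sum_congr rfl
    intro i _
    simp only [Matrix.diag_apply, Matrix.mul_apply, hcdef, dotProduct, Matrix.mulVec,
      dotProduct, hudef, Pi.star_apply, Finset.sum_mul, Finset.mul_sum]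
    rw [Finset.sum_comm]
    apply Finset.sum_congr rfl
    intro p _
    apply Finset.sum_congr rfl
    intro q _
    simp [Matrix.star_apply]
    ring
  -- pointwise inequality and equality case
  have key : ∀ i, (c i).re ≤ s i ∧ ((c i).re = s i → w i = (s i : ℂ) • u i) := by
    intro i
    have hz : ∀ r : ℝ, (star (w i - (r : ℂ) • u i) ⬝ᵥ (w i - (r : ℂ) • u i)).re
        = t i - 2 * r * (c i).re + r * r := by
      intro r
      rw [star_sub, sub_dotProduct, dotProduct_sub, dotProduct_sub]
      rw [star_smul, smul_dotProduct, smul_dotProduct,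
        dotProduct_smul, dotProduct_smul]
      rw [hww i, ← hc_w i, hcu i, huu i i]
      simp only [star_trivial, RCLike.star_def, Complex.conj_ofReal, smul_eq_mul, mul_one]
      simp [Complex.sub_re, Complex.mul_re, Complex.conj_re, Complex.conj_im]
      ring
    have hnn : ∀ z : n → ℂ, 0 ≤ (star z ⬝ᵥ z).re := by
      intro z
      rw [star_dot_self]
      simp only [Complex.ofReal_re]
      exact Finset.sum_nonneg fun p _ => Complex.normSq_nonneg _
    have hzero : ∀ z : n → ℂ, (star z ⬝ᵥ z).re = 0 → z = 0 := by
      intro z hz0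
      rw [star_dot_self] at hz0
      simp only [Complex.ofReal_re] at hz0
      have := (Finset.sum_eq_zero_iff_of_nonneg
        (fun p _ => Complex.normSq_nonneg (z p))).mp hz0
      funext p
      exact Complex.normSq_eq_zero.mp (this p (Finset.mem_univ p))
    rcases eq_or_lt_of_le (hs0 i) with hs | hs
    · -- s i = 0, t i = 0, w i = 0
      have ht0 : t i = 0 := by rw [← hst i, ← hs, mul_zero]
      have hw0 : w i = 0 := by
        apply hzero
        rw [hww i, ht0]
        simp
      have hc0 : c i = 0 := by rw [hc_w i, hw0]; simp
      constructor
      · rw [hc0, ← hs]; simp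
      · intro _; rw [hw0, ← hs]; simp
    · have hineq := hnn (w i - (s i : ℂ) • u i)
      rw [hz (s i)] at hineq
      rw [← hst i] at hineq
      have h2 : 0 ≤ 2 * s i * (s i - (c i).re) := by nlinarith
      have hle : (c i).re ≤ s i := by nlinarith
      refine ⟨hle, fun heq => ?_⟩
      have : (star (w i - (s i : ℂ) • u i) ⬝ᵥ (w i - (s i : ℂ) • u i)).re = 0 := by
        rw [hz (s i), ← hst i, heq]; ring
      have := hzero _ this
      rw [sub_eq_zero] at this
      exact this
  -- termwise equality
  have hsum_re : ∑ i, (c i).re = ∑ i, s i := by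
    have : (X.trace).re = ∑ i, (c i).re := by
      rw [htrc, Complex.re_sum]
    rw [← this, hTX, Complex.ofReal_re]
  have heach : ∀ i, (c i).re = s i := by
    intro i
    have := (Finset.sum_eq_sum_iff_of_le (fun j _ => (key j).1)).mp hsum_re
    exact this i (Finset.mem_univ i)
  have hw_eq : ∀ i, w i = (s i : ℂ) • u i := fun i => (key i).2 (heach i)
  -- conclude: Xᴴ = U D(s) Uᴴ
  have hXU : Xᴴ * U = U * Matrix.diagonal (fun i => (s i : ℂ)) := by
    ext p i
    have h1 := congrFun (hw_eq i) p
    simp only [hwdef, Matrix.mulVec, dotProduct, hudef, Pi.smul_apply, smul_eq_mul] at h1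
    rw [Matrix.mul_apply, show (U * Matrix.diagonal fun j => ((s j : ℂ))) p i
        = (s i : ℂ) * U p i from by
      simp [Matrix.mul_apply, Matrix.diagonal_apply, mul_ite, mul_zero, Finset.sum_ite_eq',
        mul_comm]]
    exact h1
  have hXH : Xᴴ = U * Matrix.diagonal (fun i => (s i : ℂ)) * star U := by
    calc Xᴴ = Xᴴ * (U * star U) := by rw [hUU', Matrix.mul_one]
    _ = (Xᴴ * U) * star U := by rw [Matrix.mul_assoc]
    _ = U * Matrix.diagonal (fun i => (s i : ℂ)) * star U := by rw [hXU]
  have hPSD : (Xᴴ).PosSemidef := by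
    rw [hXH, Matrix.star_eq_conjTranspose]
    apply Matrix.PosSemidef.mul_mul_conjTranspose_same
    refine Matrix.posSemidef_diagonal_iff.mpr fun i => ?_
    exact_mod_cast Complex.zero_le_real.mpr (hs0 i)
  have : X = Xᴴ := by
    conv_lhs => rw [← Matrix.conjTranspose_conjTranspose X, hPSD.1]
  rw [this]
  exact hPSD

end SchmidtAux

/-- **Characterization of Schmidt-symmetric states (Theorem 4).** A density matrix `ρ`
admits a decomposition `ρ = Σ_i λ_i A_i ⊗ A_i^*` with `λ_i ≥ 0` and `{A_i}` orthonormal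
iff `‖R(ρ)‖_tr = Tr R(ρ)`, equivalently iff `R(ρ)` is positive semidefinite. -/
theorem schmidt_symmetric_characterization {d : ℕ}
    (ρ : Matrix (Fin d × Fin d) (Fin d × Fin d) ℂ)
    (hρ : IsDensityMatrix ρ) :
    ((∃ (r : ℕ) (lam : Fin r → ℝ) (A : Fin r → Matrix (Fin d) (Fin d) ℂ),
        (∀ i, 0 ≤ lam i) ∧
        (∀ i j, ((A i)ᴴ * A j).trace = if i = j then 1 else 0) ∧
        ρ = ∑ i, (lam i : ℂ) • (A i ⊗ₖ (A i).map (starRingEnd ℂ))) ↔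
      (traceNorm (realign ρ) : ℂ) = (realign ρ).trace) ∧
    ((∃ (r : ℕ) (lam : Fin r → ℝ) (A : Fin r → Matrix (Fin d) (Fin d) ℂ),
        (∀ i, 0 ≤ lam i) ∧
        (∀ i j, ((A i)ᴴ * A j).trace = if i = j then 1 else 0) ∧
        ρ = ∑ i, (lam i : ℂ) • (A i ⊗ₖ (A i).map (starRingEnd ℂ))) ↔
      (realign ρ).PosSemidef) := by
  classical
  have hiff : (∃ (r : ℕ) (lam : Fin r → ℝ) (A : Fin r → Matrix (Fin d) (Fin d) ℂ),
        (∀ i, 0 ≤ lam i) ∧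
        (∀ i j, ((A i)ᴴ * A j).trace = if i = j then 1 else 0) ∧
        ρ = ∑ i, (lam i : ℂ) • (A i ⊗ₖ (A i).map (starRingEnd ℂ))) ↔
      (realign ρ).PosSemidef := by
    constructor
    · rintro ⟨r, lam, A, hl, _, hsum⟩
      have hre : realign ρ = ∑ i, (lam i : ℂ) •
          vecMulVec (fun p => A i p.1 p.2) (star (fun p => A i p.1 p.2)) := by
        rw [hsum]
        ext p q
        simp [realign, Matrix.sum_apply, vecMulVec_apply, Matrix.map_apply]
      rw [hre]
      exact SchmidtAux.posSemidef_sum_vecMulVec lam hl _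
    · intro hX
      obtain ⟨lam, v, hl, horth, hsum⟩ := SchmidtAux.posSemidef_eq_sum_vecMulVec hX
      set e : Fin (d*d) ≃ Fin d × Fin d := finProdFinEquiv.symm with hedef
      set A' : Fin (d*d) → Matrix (Fin d) (Fin d) ℂ := fun i a b => v (e i) (a, b) with hA'def
      refine ⟨d*d, fun i => lam (e i), A', fun i => hl _, ?_, ?_⟩
      · intro i j
        have h2 := horth (e i) (e j)
        have h3 : ((A' i)ᴴ * A' j).trace = star (v (e i)) ⬝ᵥ v (e j) := by
          simp only [Matrix.trace, Matrix.diag_apply, Matrix.mul_apply,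
            Matrix.conjTranspose_apply, dotProduct, Pi.star_apply, Fintype.sum_prod_type,
            Matrix.star_apply]
          exact Finset.sum_comm
        rw [h3, h2]
        simp [e.injective.eq_iff]
      · ext ⟨i, k⟩ ⟨j, l⟩
        have h4 : realign ρ (i, j) (k, l) = ρ (i, k) (j, l) := rfl
        have h5 := congrFun (congrFun hsum (i, j)) (k, l)
        rw [h4] at h5
        rw [h5]
        simp only [Matrix.sum_apply, Matrix.smul_apply, vecMulVec_apply, Pi.star_apply,
          smul_eq_mul, kroneckerMap_apply, Matrix.map_apply]
        refine Fintype.sum_equiv e.symm _ _ (fun m => ?_)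
        simp only [hA'def, Equiv.apply_symm_apply, RCLike.star_def]
  refine ⟨hiff.trans ⟨fun hX => SchmidtAux.traceNorm_eq_trace_of_posSemidef hX,
    fun h => SchmidtAux.posSemidef_of_traceNorm_eq_trace h⟩, hiff⟩
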